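/- arXiv:2507.18066 — 7 statements merged into one kernel-verified Lean document; each statement's English description precedes it below -/
import Mathlib

section
/- (Tsirelson's bound) Let A₀, A₁, B₀, B₁ be 2×2 complex Hermitian matrices satisfying A₀² = A₁² = B₀² = B₁² = I (so each has eigenvalues ±1), let Ŝ = A₀⊗B₀ + A₁⊗B₀ + A₀⊗B₁ − A₁⊗B₁, and let ρ be any 4×4 positive semidefinite matrix with trace 1. Then |Tr(Ŝρ)| ≤ 2√2. -/
open Matrix Kronecker Complex ComplexOrder

section Aux
variable {n m : Type*} [Fintype n] [Fintype m] [DecidableEq n] [DecidableEq m]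

omit [Fintype n] [Fintype m] [DecidableEq n] [DecidableEq m] in
lemma kron_conjTranspose (A : Matrix n n ℂ) (B : Matrix m m ℂ) :
    (A ⊗ₖ B)ᴴ = Aᴴ ⊗ₖ Bᴴ := by
  ext ⟨i, j⟩ ⟨k, l⟩
  simp [conjTranspose_apply, kroneckerMap_apply, mul_comm]

omit [Fintype n] [Fintype m] [DecidableEq n] [DecidableEq m] in
lemma kron_hermitian {A : Matrix n n ℂ} {B : Matrix m m ℂ}
    (hA : A.IsHermitian) (hB : B.IsHermitian) : (A ⊗ₖ B).IsHermitian := by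
  unfold Matrix.IsHermitian
  rw [kron_conjTranspose, hA.eq, hB.eq]

omit [Fintype n] [Fintype m] [DecidableEq n] [DecidableEq m] in
lemma kron_sub (A : Matrix n n ℂ) (B C : Matrix m m ℂ) :
    A ⊗ₖ (B - C) = A ⊗ₖ B - A ⊗ₖ C := by
  ext ⟨i, j⟩ ⟨k, l⟩
  simp [kroneckerMap_apply, mul_sub]

omit [Fintype n] [Fintype m] [DecidableEq n] [DecidableEq m] in
lemma sub_kron (A B : Matrix n n ℂ) (C : Matrix m m ℂ) :
    (A - B) ⊗ₖ C = A ⊗ₖ C - B ⊗ₖ C := by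
  ext ⟨i, j⟩ ⟨k, l⟩
  simp [kroneckerMap_apply, sub_mul]

omit [Fintype n] [Fintype m] [DecidableEq n] [DecidableEq m] in
lemma neg_kron_neg (A : Matrix n n ℂ) (B : Matrix m m ℂ) :
    (-A) ⊗ₖ (-B) = A ⊗ₖ B := by
  ext ⟨i, j⟩ ⟨k, l⟩
  simp [kroneckerMap_apply]

lemma kron_psd {A : Matrix n n ℂ} {B : Matrix m m ℂ}
    (hA : A.PosSemidef) (hB : B.PosSemidef) : (A ⊗ₖ B).PosSemidef := by
  exact hA.kronecker hB

omit [DecidableEq n] in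
lemma psd_smul {A : Matrix n n ℂ} (hA : A.PosSemidef) {c : ℝ} (hc : 0 ≤ c) :
    ((c : ℂ) • A).PosSemidef := by
  constructor
  · unfold Matrix.IsHermitian
    rw [conjTranspose_smul, hA.1.eq]
    norm_num
  · intro x
    exact (hA.smul (a := (c : ℂ)) (Complex.zero_le_real.mpr hc)).2 x

lemma psd_trace_nonneg {A : Matrix n n ℂ} (hA : A.PosSemidef) : 0 ≤ A.trace := by
  have h : ∀ i, 0 ≤ A i i := fun i => by
    have := hA.dotProduct_mulVec_nonneg (Pi.single i 1)
    simpa [dotProduct, Pi.single_apply] using this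
  exact Finset.sum_nonneg fun i _ => h i

open scoped MatrixOrder in
lemma trace_mul_psd_nonneg {A B : Matrix n n ℂ} (hA : A.PosSemidef) (hB : B.PosSemidef) :
    0 ≤ (A * B).trace := by
  have hs : CFC.sqrt B * CFC.sqrt B = B := CFC.sqrt_mul_sqrt_self B hB.nonneg
  have h1 : (A * B).trace = (CFC.sqrt B * A * CFC.sqrt B).trace := by
    conv_lhs => rw [← hs]
    rw [show A * (CFC.sqrt B * CFC.sqrt B) = (A * CFC.sqrt B) * CFC.sqrt B from (mul_assoc _ _ _).symm,
      trace_mul_cycle]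
  rw [h1]
  have : (CFC.sqrt B * A * CFC.sqrt B).PosSemidef := by
    have := hA.conjTranspose_mul_mul_same (CFC.sqrt B)
    rwa [(CFC.sqrt_nonneg B).posSemidef.1.eq] at this
  exact psd_trace_nonneg this

/-- If `M` is Hermitian and `c^2 • 1 - M^2` is PSD then `c • 1 - M` is PSD. -/
lemma psd_of_sq_le {M : Matrix n n ℂ} (hM : M.IsHermitian) {c : ℝ} (hc : 0 < c)
    (h : (((c ^ 2 : ℝ) : ℂ) • 1 - M * M).PosSemidef) :
    (((c : ℝ) : ℂ) • 1 - M).PosSemidef := by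
  set N := ((c : ℂ) • 1 - M) with hN
  have hNh : N.IsHermitian := by
    unfold Matrix.IsHermitian
    rw [hN, conjTranspose_sub, conjTranspose_smul, conjTranspose_one, hM.eq]
    norm_num
  have expand : N * N + (((c ^ 2 : ℝ) : ℂ) • 1 - M * M) = (((2 * c : ℝ)) : ℂ) • N := by
    rw [hN]
    simp only [sub_mul, mul_sub, smul_mul_assoc, mul_smul_comm, one_mul, mul_one, smul_sub,
      smul_smul]
    push_cast
    module
  have key : N = (((2 * c)⁻¹ : ℝ) : ℂ) • (N * N + (((c ^ 2 : ℝ) : ℂ) • 1 - M * M)) := by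
    rw [expand, smul_smul]
    have h2c : (2 * c : ℝ) ≠ 0 := by positivity
    rw [show ((((2 * c)⁻¹ : ℝ)) : ℂ) * (((2 * c : ℝ)) : ℂ) = 1 by
      push_cast; field_simp]
    rw [one_smul]
  rw [key]
  refine psd_smul (Matrix.PosSemidef.add ?_ h) (by positivity)
  have := posSemidef_conjTranspose_mul_self N
  rwa [hNh.eq] at this

lemma psd_of_sq_le' {M : Matrix n n ℂ} (hM : M.IsHermitian) {c : ℝ} (hc : 0 < c)
    (h : (((c ^ 2 : ℝ) : ℂ) • 1 - M * M).PosSemidef) :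
    (((c : ℝ) : ℂ) • 1 + M).PosSemidef := by
  have hM' : (-M).IsHermitian := hM.neg
  have h' : (((c ^ 2 : ℝ) : ℂ) • 1 - (-M) * (-M)).PosSemidef := by rwa [neg_mul_neg]
  have := psd_of_sq_le hM' hc h'
  rwa [sub_neg_eq_add] at this

/-- Commutator bound: for Hermitian involutions `X, Y`, `4•1 - [Y,X]ᴴ[Y,X]` is PSD. -/
lemma comm_sq_bound {X Y : Matrix n n ℂ} (hX : X.IsHermitian) (hY : Y.IsHermitian)
    (hX2 : X * X = 1) (hY2 : Y * Y = 1) :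
    (((4 : ℝ) : ℂ) • 1 - (Y * X - X * Y)ᴴ * (Y * X - X * Y)).PosSemidef := by
  have h1 : (Y * X) * (X * Y) = 1 := by
    rw [mul_assoc, ← mul_assoc X X Y, hX2, one_mul, hY2]
  have h2 : (X * Y) * (Y * X) = 1 := by
    rw [mul_assoc, ← mul_assoc Y Y X, hY2, one_mul, hX2]
  have h3 : (Y * X) * (Y * X) * ((X * Y) * (X * Y)) = 1 := by
    rw [mul_assoc (Y * X) (Y * X), ← mul_assoc (Y * X) (X * Y), h1, one_mul, h1]
  have key : ((4 : ℝ) : ℂ) • 1 - (Y * X - X * Y)ᴴ * (Y * X - X * Y)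
      = (1 + X * Y * (X * Y))ᴴ * (1 + X * Y * (X * Y)) := by
    simp only [conjTranspose_sub, conjTranspose_add, conjTranspose_mul, conjTranspose_one,
      hX.eq, hY.eq]
    simp only [sub_mul, mul_sub, add_mul, mul_add, one_mul, mul_one]
    rw [h1, h2, h3]
    push_cast
    module
  rw [key]
  exact posSemidef_conjTranspose_mul_self _
end Aux

/-- Tsirelson's bound: for Hermitian ±1-valued observables `A₀ A₁ B₀ B₁` (i.e. squaring to
the identity), the CHSH operator `Ŝ = A₀⊗B₀ + A₁⊗B₀ + A₀⊗B₁ − A₁⊗B₁` satisfies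
`|Tr(Ŝρ)| ≤ 2√2` for every two-qubit density matrix ρ. -/
theorem tsirelson_bound (A₀ A₁ B₀ B₁ : Matrix (Fin 2) (Fin 2) ℂ)
    (hA₀ : A₀.IsHermitian) (hA₁ : A₁.IsHermitian)
    (hB₀ : B₀.IsHermitian) (hB₁ : B₁.IsHermitian)
    (hA₀sq : A₀ * A₀ = 1) (hA₁sq : A₁ * A₁ = 1)
    (hB₀sq : B₀ * B₀ = 1) (hB₁sq : B₁ * B₁ = 1)
    (ρ : Matrix (Fin 2 × Fin 2) (Fin 2 × Fin 2) ℂ)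
    (hρ : ρ.PosSemidef) (htr : ρ.trace = 1) :
    |(((A₀ ⊗ₖ B₀ + A₁ ⊗ₖ B₀ + A₀ ⊗ₖ B₁ - A₁ ⊗ₖ B₁) * ρ).trace).re| ≤ 2 * Real.sqrt 2 := by
  set S : Matrix (Fin 2 × Fin 2) (Fin 2 × Fin 2) ℂ :=
    A₀ ⊗ₖ B₀ + A₁ ⊗ₖ B₀ + A₀ ⊗ₖ B₁ - A₁ ⊗ₖ B₁ with hSdef
  set C : Matrix (Fin 2) (Fin 2) ℂ := A₁ * A₀ - A₀ * A₁ with hCdef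
  set D : Matrix (Fin 2) (Fin 2) ℂ := B₀ * B₁ - B₁ * B₀ with hDdef
  -- Hermitian facts
  have hS : S.IsHermitian :=
    (((kron_hermitian hA₀ hB₀).add (kron_hermitian hA₁ hB₀)).add
      (kron_hermitian hA₀ hB₁)).sub (kron_hermitian hA₁ hB₁)
  have hCH : Cᴴ = -C := by
    rw [hCdef, conjTranspose_sub, conjTranspose_mul, conjTranspose_mul,
      hA₀.eq, hA₁.eq, neg_sub]
  have hDH : Dᴴ = -D := by
    rw [hDdef, conjTranspose_sub, conjTranspose_mul, conjTranspose_mul,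
      hB₀.eq, hB₁.eq, neg_sub]
  have hM : (C ⊗ₖ D).IsHermitian := by
    unfold Matrix.IsHermitian
    rw [kron_conjTranspose, hCH, hDH, neg_kron_neg]
  -- S² = 4•1 + C ⊗ D
  have hSS : S * S = ((4 : ℝ) : ℂ) • 1 + C ⊗ₖ D := by
    rw [hSdef, hCdef, hDdef]
    simp only [add_mul, mul_add, sub_mul, mul_sub, ← mul_kronecker_mul,
      hA₀sq, hA₁sq, hB₀sq, hB₁sq, kron_sub, sub_kron, one_kronecker_one]
    push_cast
    module
  -- 4•1 - CᴴC and 4•1 - DᴴD are PSD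
  have hC4 : (((4 : ℝ) : ℂ) • 1 - Cᴴ * C).PosSemidef := comm_sq_bound hA₀ hA₁ hA₀sq hA₁sq
  have hD4 : (((4 : ℝ) : ℂ) • 1 - Dᴴ * D).PosSemidef := by
    have := comm_sq_bound hB₁ hB₀ hB₁sq hB₀sq
    rwa [show B₀ * B₁ - B₁ * B₀ = D from rfl] at this
  -- 16•1 - (C⊗D)² is PSD
  have hMsq : (C ⊗ₖ D) * (C ⊗ₖ D) = (Cᴴ * C) ⊗ₖ (Dᴴ * D) := by
    rw [← mul_kronecker_mul, ← neg_kron_neg (C * C) (D * D), ← neg_mul, ← neg_mul,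
      ← hCH, ← hDH]
  have h16 : ((((4 : ℝ) ^ 2 : ℝ)) : ℂ) • 1 - (C ⊗ₖ D) * (C ⊗ₖ D) |>.PosSemidef := by
    rw [hMsq]
    have hid : ((((4 : ℝ) ^ 2 : ℝ)) : ℂ) • (1 : Matrix (Fin 2 × Fin 2) (Fin 2 × Fin 2) ℂ)
        - (Cᴴ * C) ⊗ₖ (Dᴴ * D)
        = (((4 : ℝ) : ℂ) • 1 - Cᴴ * C) ⊗ₖ (Dᴴ * D)
          + ((4 : ℝ) : ℂ) • ((1 : Matrix (Fin 2) (Fin 2) ℂ) ⊗ₖ (((4 : ℝ) : ℂ) • 1 - Dᴴ * D)) := by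
      simp only [sub_kron, kron_sub, smul_kronecker, kronecker_smul, one_kronecker_one,
        smul_smul, smul_sub]
      push_cast
      module
    rw [hid]
    refine Matrix.PosSemidef.add (kron_psd ?_ (posSemidef_conjTranspose_mul_self D))
      (psd_smul (kron_psd Matrix.PosSemidef.one hD4) (by norm_num))
    exact hC4
  -- 8•1 - S² is PSD
  have hS8 : (((((2 * Real.sqrt 2) ^ 2 : ℝ)) : ℂ) • 1 - S * S).PosSemidef := by
    have hsq : ((2 * Real.sqrt 2) ^ 2 : ℝ) = 8 := by
      rw [mul_pow, Real.sq_sqrt (by norm_num : (0:ℝ) ≤ 2)]; norm_num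
    rw [hsq, hSS]
    have h4M := psd_of_sq_le hM (by norm_num : (0:ℝ) < 4) h16
    have hid : ((8 : ℝ) : ℂ) • (1 : Matrix (Fin 2 × Fin 2) (Fin 2 × Fin 2) ℂ)
        - (((4 : ℝ) : ℂ) • 1 + C ⊗ₖ D)
        = ((4 : ℝ) : ℂ) • 1 - C ⊗ₖ D := by push_cast; module
    rw [show ((8:ℝ):ℂ) = (((8:ℝ)):ℂ) from rfl]
    rw [hid]
    exact h4M
  have hc : (0 : ℝ) < 2 * Real.sqrt 2 := by positivity
  have hplus := psd_of_sq_le' hS hc hS8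
  have hminus := psd_of_sq_le hS hc hS8
  -- conclude via traces
  have key : ∀ (P : Matrix (Fin 2 × Fin 2) (Fin 2 × Fin 2) ℂ), P.PosSemidef →
      0 ≤ ((P * ρ).trace).re := fun P hP => by
    have := trace_mul_psd_nonneg hP hρ
    exact (Complex.le_def.mp this).1
  have h1 := key _ hminus
  have h2 := key _ hplus
  rw [sub_mul, smul_mul_assoc, one_mul, trace_sub, trace_smul, htr, smul_eq_mul, mul_one,
    Complex.sub_re, Complex.ofReal_re] at h1
  rw [add_mul, smul_mul_assoc, one_mul, trace_add, trace_smul, htr, smul_eq_mul, mul_one,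
    Complex.add_re, Complex.ofReal_re] at h2
  rw [abs_le]
  constructor <;> [linarith; linarith]
end

section
/- Let Ŝ = A₀⊗B₀ + A₁⊗B₀ + A₀⊗B₁ − A₁⊗B₁ with A₀ = σx, A₁ = σz, B₀ = (σx+σz)/√2, B₁ = (σx−σz)/√2, and for a two-qubit density matrix ρ define S(ρ) = Tr(ρŜ) and F(ρ) = ⟨Φ⁺|ρ|Φ⁺⟩. Then for every positive semidefinite matrix ρ with trace 1, S(ρ)/(2√2) ≤ F(ρ) ≤ S(ρ)/(4√2) + 1/2. -/
open Matrix Kronecker Complex ComplexOrder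

noncomputable section

/-- Pauli X matrix. -/
def sigX : Matrix (Fin 2) (Fin 2) ℂ := !![0, 1; 1, 0]

/-- Pauli Z matrix. -/
def sigZ : Matrix (Fin 2) (Fin 2) ℂ := !![1, 0; 0, -1]

/-- Bob's observable `B₀ = (σx + σz)/√2`. -/
def Bob0 : Matrix (Fin 2) (Fin 2) ℂ := ((Real.sqrt 2 : ℂ))⁻¹ • (sigX + sigZ)

/-- Bob's observable `B₁ = (σx − σz)/√2`. -/
def Bob1 : Matrix (Fin 2) (Fin 2) ℂ := ((Real.sqrt 2 : ℂ))⁻¹ • (sigX - sigZ)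

/-- The CHSH operator `Ŝ = A₀⊗B₀ + A₁⊗B₀ + A₀⊗B₁ − A₁⊗B₁` with `A₀ = σx`, `A₁ = σz`. -/
def Shat : Matrix (Fin 2 × Fin 2) (Fin 2 × Fin 2) ℂ :=
  sigX ⊗ₖ Bob0 + sigZ ⊗ₖ Bob0 + sigX ⊗ₖ Bob1 - sigZ ⊗ₖ Bob1

/-- Bell state `|Φ⁺⟩ = (|00⟩ + |11⟩)/√2`. -/
def phiPlus : Fin 2 × Fin 2 → ℂ :=
  fun p => if p = (0, 0) ∨ p = (1, 1) then ((Real.sqrt 2 : ℂ))⁻¹ else 0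

/-- CHSH measure `S(ρ) = Tr(ρ Ŝ)` (a real number for Hermitian ρ). -/
def Smeas (ρ : Matrix (Fin 2 × Fin 2) (Fin 2 × Fin 2) ℂ) : ℝ :=
  ((ρ * Shat).trace).re

/-- Entanglement fidelity `F(ρ) = ⟨Φ⁺|ρ|Φ⁺⟩`. -/
def Fent (ρ : Matrix (Fin 2 × Fin 2) (Fin 2 × Fin 2) ℂ) : ℝ :=
  (star phiPlus ⬝ᵥ ρ *ᵥ phiPlus).re

end

set_option maxHeartbeats 1000000 in
theorem fidelity_bounds (ρ : Matrix (Fin 2 × Fin 2) (Fin 2 × Fin 2) ℂ)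
    (hρ : ρ.PosSemidef) (htr : ρ.trace = 1) :
    Smeas ρ / (2 * Real.sqrt 2) ≤ Fent ρ ∧
      Fent ρ ≤ Smeas ρ / (4 * Real.sqrt 2) + 1 / 2 := by
  have hs2 : Real.sqrt 2 * Real.sqrt 2 = 2 := Real.mul_self_sqrt (by norm_num)
  have hs0 : (0:ℝ) < Real.sqrt 2 := Real.sqrt_pos.mpr (by norm_num)
  have htr' : (ρ 0 0).re + (ρ (0,1) (0,1)).re + (ρ (1,0) (1,0)).re + (ρ 1 1).re = 1 := by
    have := congrArg Complex.re htr
    simp only [Matrix.trace, Matrix.diag, Fintype.sum_prod_type, Fin.sum_univ_two,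
      Complex.add_re, Complex.one_re, Prod.mk_zero_zero, Prod.mk_one_one] at this
    linarith [this]
  have h1 : 0 ≤ (ρ (0,1) (0,1)).re + (ρ (1,0) (1,0)).re - (ρ (0,1) (1,0)).re - (ρ (1,0) (0,1)).re := by
    have h := (Complex.le_def.mp (hρ.dotProduct_mulVec_nonneg (fun p => if p = ((0:Fin 2),(1:Fin 2)) then 1 else if p = (1,0) then -1 else 0))).1
    simp only [dotProduct, Matrix.mulVec, Fintype.sum_prod_type, Fin.sum_univ_two,
      Pi.star_apply] at h
    norm_num [Prod.ext_iff, Complex.add_re, Complex.neg_re] at h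
    linarith [h]
  have h2 : 0 ≤ (ρ 0 0).re + (ρ 1 1).re - (ρ 0 1).re - (ρ 1 0).re := by
    have h := (Complex.le_def.mp (hρ.dotProduct_mulVec_nonneg (fun p => if p = ((0:Fin 2),(0:Fin 2)) then 1 else if p = (1,1) then -1 else 0))).1
    simp only [dotProduct, Matrix.mulVec, Fintype.sum_prod_type, Fin.sum_univ_two,
      Pi.star_apply] at h
    norm_num [Prod.ext_iff, Complex.add_re, Complex.neg_re] at h
    simp only [Prod.mk_zero_zero, Prod.mk_one_one] at h
    linarith [h]
  have h3 : 0 ≤ (ρ (0,1) (0,1)).re + (ρ (1,0) (1,0)).re + (ρ (0,1) (1,0)).re + (ρ (1,0) (0,1)).re := by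
    have h := (Complex.le_def.mp (hρ.dotProduct_mulVec_nonneg (fun p => if p = ((0:Fin 2),(1:Fin 2)) then 1 else if p = (1,0) then 1 else 0))).1
    simp only [dotProduct, Matrix.mulVec, Fintype.sum_prod_type, Fin.sum_univ_two,
      Pi.star_apply] at h
    norm_num [Prod.ext_iff, Complex.add_re, Complex.neg_re] at h
    linarith [h]
  have hS : Smeas ρ = Real.sqrt 2 * ((ρ 0 0).re + (ρ 1 1).re - (ρ (0,1) (0,1)).re - (ρ (1,0) (1,0)).re
      + (ρ 0 1).re + (ρ 1 0).re + (ρ (0,1) (1,0)).re + (ρ (1,0) (0,1)).re) := by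
    simp only [Smeas, Shat, Bob0, Bob1, sigX, sigZ, Matrix.trace, Matrix.diag, Matrix.mul_apply,
      Fintype.sum_prod_type, Fin.sum_univ_two, Matrix.add_apply, Matrix.sub_apply,
      Matrix.kroneckerMap_apply, Matrix.smul_apply, smul_eq_mul]
    norm_num [Matrix.cons_val_zero, Matrix.cons_val_one, Matrix.head_cons]
    simp only [Prod.mk_zero_zero, Prod.mk_one_one]
    ring
  have hF : Fent ρ = ((ρ 0 0).re + (ρ 1 1).re + (ρ 0 1).re + (ρ 1 0).re) / 2 := by
    simp only [Fent, phiPlus, dotProduct, Matrix.mulVec, Fintype.sum_prod_type,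
      Fin.sum_univ_two, Pi.star_apply]
    norm_num [Prod.ext_iff]
    linear_combination ((ρ 0 0).re + (ρ 1 1).re + (ρ 0 1).re + (ρ 1 0).re) / 4 * hs2
  constructor
  · rw [hS, hF, div_le_iff₀ (by positivity)]
    nlinarith [h1, hs2, hs0]
  · rw [hS, hF, div_add' _ _ _ (by positivity), le_div_iff₀ (by positivity)]
    nlinarith [h2, h3, htr', hs2, hs0]
end

section
/- Let Ŝ be the CHSH operator for the fixed observables A₀ = σx, A₁ = σz, B₀ = (σx+σz)/√2, B₁ = (σx−σz)/√2, and S(ρ) = Tr(ρŜ). If ρ is a 4×4 positive semidefinite matrix with trace 1 and S(ρ) = 2√2, then ρ = |Φ⁺⟩⟨Φ⁺|. In other words, the EPR state |Φ⁺⟩⟨Φ⁺| is the unique global maximizer of S over the set of two-qubit density matrices. -/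
open Matrix Kronecker Complex ComplexOrder

noncomputable section

/-- Bell state `|Ψ⁻⟩ = (|01⟩ − |10⟩)/√2`. -/
def psiMinus : Fin 2 × Fin 2 → ℂ :=
  fun p => if p = (0, 1) then ((Real.sqrt 2 : ℂ))⁻¹
    else if p = (1, 0) then -((Real.sqrt 2 : ℂ))⁻¹ else 0

end

section CHSHhelpers
variable {n : Type*} [Fintype n] [DecidableEq n]

private lemma quad_expand' (ρ : Matrix n n ℂ) (i j : n) (c e : ℂ) :
    star (Pi.single i c + Pi.single j e) ⬝ᵥ ρ *ᵥ (Pi.single i c + Pi.single j e)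
    = (starRingEnd ℂ c) * c * ρ i i + (starRingEnd ℂ c) * e * ρ i j
      + (starRingEnd ℂ e) * c * ρ j i + (starRingEnd ℂ e) * e * ρ j j := by
  simp only [star_add, ← Pi.single_star, mulVec_add, mulVec_single, dotProduct_add,
    add_dotProduct, single_dotProduct, Complex.star_def, Pi.smul_apply,
    MulOpposite.smul_eq_mul_unop, MulOpposite.unop_op, col_apply]
  ring

private lemma single_quad' (ρ : Matrix n n ℂ) (i : n) :
    star (Pi.single i (1:ℂ)) ⬝ᵥ ρ *ᵥ (Pi.single i (1:ℂ)) = ρ i i := by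
  simp only [← Pi.single_star, mulVec_single, single_dotProduct, star_one, one_mul, mul_one,
    Pi.smul_apply, MulOpposite.smul_eq_mul_unop, MulOpposite.unop_op, col_apply]

private lemma psd_diag' {ρ : Matrix n n ℂ} (h : ρ.PosSemidef) (i : n) :
    0 ≤ (ρ i i).re ∧ (ρ i i).im = 0 := by
  have := h.dotProduct_mulVec_nonneg (Pi.single i 1)
  rw [single_quad'] at this
  rw [Complex.le_def] at this
  exact ⟨this.1, this.2.symm⟩

private lemma psd_cs' {ρ : Matrix n n ℂ} (h : ρ.PosSemidef) (i j : n) :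
    (ρ i j).re ^ 2 + (ρ i j).im ^ 2 ≤ (ρ i i).re * (ρ j j).re := by
  set a := (ρ i i).re with ha
  set d := (ρ j j).re with hdd
  have ha0 : 0 ≤ a := (psd_diag' h i).1
  have hd0 : 0 ≤ d := (psd_diag' h j).1
  have hiim : (ρ i i).im = 0 := (psd_diag' h i).2
  have hjim : (ρ j j).im = 0 := (psd_diag' h j).2
  have hconj : ρ j i = starRingEnd ℂ (ρ i j) := by
    have := h.1.apply j i
    rw [← this]
    simp [Complex.star_def]
  have hre : (ρ j i).re = (ρ i j).re := by rw [hconj]; simp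
  have him : (ρ j i).im = -(ρ i j).im := by rw [hconj]; simp
  rcases hd0.eq_or_lt with hd | hd
  · set t : ℝ := -(a+1)⁻¹ with htd
    have hkey := h.dotProduct_mulVec_nonneg (Pi.single i ((t:ℂ) * ρ i j) + Pi.single j 1)
    rw [quad_expand', Complex.le_def] at hkey
    obtain ⟨hkey, -⟩ := hkey
    simp only [Complex.add_re, Complex.mul_re, Complex.mul_im, Complex.conj_re,
      Complex.conj_im, Complex.ofReal_re, Complex.ofReal_im, Complex.one_re, Complex.one_im,
      Complex.zero_re, hre, him, hiim, hjim] at hkey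
    have key2 : 0 ≤ ((ρ i j).re^2 + (ρ i j).im^2) * (t*t*a + 2*t) + d := by
      rw [← ha, ← hdd] at hkey; linarith [hkey]
    have hta : 0 < a + 1 := by linarith
    have htinv : (a+1)⁻¹ * (a+1) = 1 := inv_mul_cancel₀ (ne_of_gt hta)
    have h1 : 0 < (a+1)⁻¹ := by positivity
    have hea : (a+1)⁻¹ * a = 1 - (a+1)⁻¹ := by linear_combination htinv
    have hfac : t*t*a + 2*t < 0 := by
      rw [htd]; nlinarith [hea, h1, mul_pos h1 h1]
    nlinarith [key2, hfac, sq_nonneg ((ρ i j).re), sq_nonneg ((ρ i j).im),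
      mul_nonneg ha0 hd0]
  · have hkey := h.dotProduct_mulVec_nonneg (Pi.single i ((d:ℂ)) + Pi.single j (-(starRingEnd ℂ (ρ i j))))
    rw [quad_expand', Complex.le_def] at hkey
    obtain ⟨hkey, -⟩ := hkey
    simp only [map_neg, Complex.add_re, Complex.neg_re, Complex.neg_im, Complex.mul_re,
      Complex.mul_im, Complex.conj_re, Complex.conj_im, Complex.ofReal_re, Complex.ofReal_im,
      Complex.zero_re, hre, him, hiim, hjim,
      RingHomCompTriple.comp_apply, RingHom.id_apply] at hkey
    have key2 : 0 ≤ d*d*a - d*((ρ i j).re^2 + (ρ i j).im^2) := by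
      rw [← ha, ← hdd] at hkey; linarith [hkey]
    nlinarith [key2, hd, mul_pos hd hd]

end CHSHhelpers

set_option maxHeartbeats 2000000 in
/-- The EPR state `|Φ⁺⟩⟨Φ⁺|` is the unique global maximizer of the CHSH measure:
if a two-qubit density matrix attains `S(ρ) = 2√2` then `ρ = |Φ⁺⟩⟨Φ⁺|`. -/
theorem unique_maximizer_of_chsh (ρ : Matrix (Fin 2 × Fin 2) (Fin 2 × Fin 2) ℂ)
    (hρ : ρ.PosSemidef) (htr : ρ.trace = 1)
    (hS : Smeas ρ = 2 * Real.sqrt 2) :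
    ρ = vecMulVec phiPlus (star phiPlus) := by
  have hH : ∀ p q : Fin 2 × Fin 2, ρ q p = starRingEnd ℂ (ρ p q) := by
    intro p q
    have := hρ.1.apply q p
    rw [← this]; simp [Complex.star_def]
  have hda := psd_diag' hρ ((0,0) : Fin 2 × Fin 2)
  have hdb := psd_diag' hρ ((0,1) : Fin 2 × Fin 2)
  have hdc := psd_diag' hρ ((1,0) : Fin 2 × Fin 2)
  have hdd := psd_diag' hρ ((1,1) : Fin 2 × Fin 2)
  have htr' : (ρ (0,0) (0,0)).re + (ρ (0,1) (0,1)).re + (ρ (1,0) (1,0)).re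
      + (ρ (1,1) (1,1)).re = 1 := by
    have := congrArg Complex.re htr
    simp [Matrix.trace, Matrix.diag, Fintype.sum_prod_type, Fin.sum_univ_two] at this
    linarith
  have htrS : (ρ * Shat).trace = ((Real.sqrt 2 : ℂ))⁻¹ *
      (2*ρ (0,0) (0,0) - 2*ρ (0,1) (0,1) - 2*ρ (1,0) (1,0) + 2*ρ (1,1) (1,1)
        + 2*ρ (0,0) (1,1) + 2*ρ (1,1) (0,0) + 2*ρ (0,1) (1,0) + 2*ρ (1,0) (0,1)) := by
    simp [Matrix.trace, Matrix.diag, Matrix.mul_apply, Fintype.sum_prod_type, Fin.sum_univ_two,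
      Shat, Bob0, Bob1, sigX, sigZ, Matrix.kroneckerMap_apply]
    ring
  have hs2 : Real.sqrt 2 * Real.sqrt 2 = 2 := Real.mul_self_sqrt (by norm_num)
  have hs2pos : 0 < Real.sqrt 2 := Real.sqrt_pos.mpr (by norm_num)
  have h1 : Smeas ρ = (Real.sqrt 2)⁻¹ *
      (2*(ρ (0,0) (0,0)).re - 2*(ρ (0,1) (0,1)).re - 2*(ρ (1,0) (1,0)).re
        + 2*(ρ (1,1) (1,1)).re + 4*(ρ (0,0) (1,1)).re + 4*(ρ (0,1) (1,0)).re) := by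
    rw [Smeas, htrS, hH (0,0) (1,1), hH (0,1) (1,0),
      show ((Real.sqrt 2 : ℂ))⁻¹ = (((Real.sqrt 2)⁻¹ : ℝ) : ℂ) by push_cast; ring,
      Complex.re_ofReal_mul]
    simp only [Complex.add_re, Complex.sub_re, Complex.mul_re, Complex.re_ofNat,
      Complex.im_ofNat, Complex.conj_re, Complex.conj_im, hda.2, hdb.2, hdc.2, hdd.2]
    ring
  rw [h1] at hS
  have hE : 2*(ρ (0,0) (0,0)).re - 2*(ρ (0,1) (0,1)).re - 2*(ρ (1,0) (1,0)).re
      + 2*(ρ (1,1) (1,1)).re + 4*(ρ (0,0) (1,1)).re + 4*(ρ (0,1) (1,0)).re = 4 := by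
    have h3 := congrArg (fun r => Real.sqrt 2 * r) hS
    rw [← mul_assoc, mul_inv_cancel₀ (ne_of_gt hs2pos), one_mul] at h3
    nlinarith [h3, hs2]
  have cs03 := psd_cs' hρ ((0,0) : Fin 2 × Fin 2) ((1,1) : Fin 2 × Fin 2)
  have cs12 := psd_cs' hρ ((0,1) : Fin 2 × Fin 2) ((1,0) : Fin 2 × Fin 2)
  have hx : 2 * (ρ (0,0) (1,1)).re ≤ (ρ (0,0) (0,0)).re + (ρ (1,1) (1,1)).re := by
    nlinarith [cs03, sq_nonneg ((ρ (0,0) (0,0)).re - (ρ (1,1) (1,1)).re),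
      sq_nonneg ((ρ (0,0) (1,1)).im), hda.1, hdd.1]
  have hy : 2 * (ρ (0,1) (1,0)).re ≤ (ρ (0,1) (0,1)).re + (ρ (1,0) (1,0)).re := by
    nlinarith [cs12, sq_nonneg ((ρ (0,1) (0,1)).re - (ρ (1,0) (1,0)).re),
      sq_nonneg ((ρ (0,1) (1,0)).im), hdb.1, hdc.1]
  have hb0 : (ρ (0,1) (0,1)).re = 0 := by
    linarith only [hE, htr', hx, hy, hdb.1, hdc.1]
  have hc0 : (ρ (1,0) (1,0)).re = 0 := by
    linarith only [hE, htr', hx, hy, hdb.1, hdc.1]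
  have hw : ρ (0,1) (1,0) = 0 := by
    have h0 : (ρ (0,1) (1,0)).re ^ 2 + (ρ (0,1) (1,0)).im ^ 2 ≤ 0 := by
      rw [hb0, hc0] at cs12; linarith only [cs12]
    refine Complex.ext ?_ ?_ <;> simp only [Complex.zero_re, Complex.zero_im] <;>
      nlinarith [h0, sq_nonneg ((ρ (0,1) (1,0)).re), sq_nonneg ((ρ (0,1) (1,0)).im)]
  have hyre : (ρ (0,1) (1,0)).re = 0 := by rw [hw]; simp
  have hx12 : (ρ (0,0) (1,1)).re = 1/2 := by
    linarith only [hE, htr', hb0, hc0, hyre]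
  have had1 : (ρ (0,0) (0,0)).re = 1/2 := by
    nlinarith [cs03, hx12, sq_nonneg ((ρ (0,0) (0,0)).re - (ρ (1,1) (1,1)).re),
      sq_nonneg ((ρ (0,0) (1,1)).im), htr', hb0, hc0]
  have had2 : (ρ (1,1) (1,1)).re = 1/2 := by
    linarith only [had1, htr', hb0, hc0]
  have him03 : (ρ (0,0) (1,1)).im = 0 := by
    nlinarith [cs03, hx12, had1, had2, sq_nonneg ((ρ (0,0) (1,1)).im)]
  -- entry values
  have h00 : ρ (0,0) (0,0) = 1/2 :=
    Complex.ext (by simpa using had1) (by simpa using hda.2)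
  have h11 : ρ (1,1) (1,1) = 1/2 :=
    Complex.ext (by simpa using had2) (by simpa using hdd.2)
  have hm : ρ (0,0) (1,1) = 1/2 :=
    Complex.ext (by simpa using hx12) (by simpa using him03)
  have hm' : ρ (1,1) (0,0) = 1/2 := by
    rw [hH (0,0) (1,1), hm]; simp [Complex.ext_iff]
  have hw' : ρ (1,0) (0,1) = 0 := by rw [hH (0,1) (1,0), hw, map_zero]
  have hzero : ∀ p q : Fin 2 × Fin 2, (ρ p p).re = 0 → ρ q p = 0 ∧ ρ p q = 0 := by
    intro p q h0
    have cs := psd_cs' hρ q p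
    rw [h0, mul_zero] at cs
    have hqp : ρ q p = 0 := by
      refine Complex.ext ?_ ?_ <;> simp only [Complex.zero_re, Complex.zero_im] <;>
        nlinarith [cs, sq_nonneg ((ρ q p).re), sq_nonneg ((ρ q p).im)]
    exact ⟨hqp, by rw [hH q p, hqp, map_zero]⟩
  have hz1 := hzero (0,1) (0,0) hb0
  have hz2 := hzero (0,1) (1,1) hb0
  have hz3 := hzero (1,0) (0,0) hc0
  have hz4 := hzero (1,0) (1,1) hc0
  have hz5 := hzero (0,1) (0,1) hb0
  have hz6 := hzero (1,0) (1,0) hc0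
  have hval : ((Real.sqrt 2 : ℂ))⁻¹ * ((Real.sqrt 2 : ℂ))⁻¹ = 1/2 := by
    rw [← mul_inv, ← Complex.ofReal_mul, hs2]
    norm_num
  ext ⟨i, j⟩ ⟨k, l⟩
  fin_cases i <;> fin_cases j <;> fin_cases k <;> fin_cases l <;>
    simp only [vecMulVec_apply, Pi.star_apply, phiPlus, Complex.star_def] <;>
    norm_num [Prod.ext_iff] <;>
    first
      | (rw [hval]; first | exact h00 | exact h11 | exact hm | exact hm')
      | exact hw | exact hw'
      | exact hz1.1 | exact hz1.2 | exact hz2.1 | exact hz2.2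
      | exact hz3.1 | exact hz3.2 | exact hz4.1 | exact hz4.2
      | exact hz5.1 | exact hz6.1
end

section
/- Let Ŝ be the CHSH operator for the fixed observables A₀ = σx, A₁ = σz, B₀ = (σx+σz)/√2, B₁ = (σx−σz)/√2. If ρ is a 4×4 positive semidefinite matrix with trace 1 and S(ρ) = Tr(ρŜ) = 2√2 − ε for some 0 < ε < 2√2, then the entanglement fidelity satisfies F(ρ) ≥ 1 − ε/(2√2). -/
open Matrix Kronecker Complex ComplexOrder

lemma Shat_eq : Shat = ((2 * Real.sqrt 2 : ℝ) : ℂ) •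
    (vecMulVec phiPlus (star phiPlus) - vecMulVec psiMinus (star psiMinus)) := by
  have hs : (Real.sqrt 2 : ℂ) * (Real.sqrt 2 : ℂ) = 2 := by
    norm_cast
    exact Real.mul_self_sqrt (by norm_num)
  have hs0 : (Real.sqrt 2 : ℂ) ≠ 0 := by
    intro h
    rw [h, mul_zero] at hs
    norm_num at hs
  ext ⟨i, j⟩ ⟨k, l⟩
  fin_cases i <;> fin_cases j <;> fin_cases k <;> fin_cases l <;>
    simp [Shat, sigX, sigZ, Bob0, Bob1, phiPlus, psiMinus, vecMulVec, kroneckerMap_apply,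
      Matrix.smul_apply, Prod.ext_iff] <;>
    field_simp <;> ring_nf

lemma trace_mul_vecMulVec (ρ : Matrix (Fin 2 × Fin 2) (Fin 2 × Fin 2) ℂ)
    (v : Fin 2 × Fin 2 → ℂ) :
    (ρ * vecMulVec v (star v)).trace = star v ⬝ᵥ ρ *ᵥ v := by
  simp only [Matrix.trace, Matrix.diag, Matrix.mul_apply, vecMulVec_apply,
    dotProduct, mulVec, Pi.star_apply, Finset.mul_sum]
  refine Finset.sum_congr rfl fun i _ => Finset.sum_congr rfl fun j _ => ?_
  ring

/-- If the CHSH measure of ρ is `2√2 − ε` for some `0 < ε < 2√2`, then the entanglement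
fidelity satisfies `F(ρ) ≥ 1 − ε/(2√2)`. -/
theorem fidelity_lower_bound_of_near_max_chsh
    (ρ : Matrix (Fin 2 × Fin 2) (Fin 2 × Fin 2) ℂ)
    (hρ : ρ.PosSemidef) (htr : ρ.trace = 1)
    (ε : ℝ) (hε : 0 < ε) (hε' : ε < 2 * Real.sqrt 2)
    (hS : Smeas ρ = 2 * Real.sqrt 2 - ε) :
    Fent ρ ≥ 1 - ε / (2 * Real.sqrt 2) := by
  have hc : (0:ℝ) < 2 * Real.sqrt 2 := by positivity
  have hG : 0 ≤ (star psiMinus ⬝ᵥ ρ *ᵥ psiMinus).re := by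
    have := hρ.dotProduct_mulVec_nonneg psiMinus
    exact (Complex.le_def.mp this).1
  have key : Smeas ρ = 2 * Real.sqrt 2 * (Fent ρ - (star psiMinus ⬝ᵥ ρ *ᵥ psiMinus).re) := by
    unfold Smeas Fent
    rw [Shat_eq, Matrix.mul_smul, Matrix.mul_sub, trace_smul, trace_sub,
      trace_mul_vecMulVec, trace_mul_vecMulVec]
    simp [Complex.ofReal_mul]
  rw [key] at hS
  have hF : Fent ρ - (star psiMinus ⬝ᵥ ρ *ᵥ psiMinus).re = 1 - ε / (2 * Real.sqrt 2) := by
    field_simp at hS ⊢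
    linarith
  nlinarith [hG]
end

section
/- Let Ŝ be the CHSH operator for the fixed observables A₀ = σx, A₁ = σz, B₀ = (σx+σz)/√2, B₁ = (σx−σz)/√2, and S(ρ) = Tr(ρŜ). Then: (i) for every 4×4 positive semidefinite matrix ρ with trace 1, −2√2 ≤ S(ρ) ≤ 2√2; (ii) S(|Φ⁺⟩⟨Φ⁺|) = 2√2; and (iii) S(|Ψ⁻⟩⟨Ψ⁻|) = −2√2. Hence the maximum and minimum of S over the set of two-qubit density matrices are attained at |Φ⁺⟩⟨Φ⁺| and |Ψ⁻⟩⟨Ψ⁻| respectively. -/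
open Matrix Kronecker Complex ComplexOrder

noncomputable section CHSHAux

def uvec : Fin 2 × Fin 2 → ℂ := fun p => if p = (0,0) ∨ p = (1,1) then 1 else 0
def vvec : Fin 2 × Fin 2 → ℂ := fun p => if p = (0,1) then 1 else if p = (1,0) then -1 else 0
def wvec : Fin 2 × Fin 2 → ℂ := fun p => if p = (0,0) then 1 else if p = (1,1) then -1 else 0
def zvec : Fin 2 × Fin 2 → ℂ := fun p => if p = (0,1) ∨ p = (1,0) then 1 else 0

lemma trace_formula (ρ : Matrix (Fin 2 × Fin 2) (Fin 2 × Fin 2) ℂ) :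
    (ρ * Shat).trace = (2 * ((Real.sqrt 2 : ℂ))⁻¹) *
      ((star uvec ⬝ᵥ ρ *ᵥ uvec) - (star vvec ⬝ᵥ ρ *ᵥ vvec)) := by
  simp [Shat, sigX, sigZ, Bob0, Bob1, uvec, vvec, Matrix.trace, Matrix.mul_apply,
    dotProduct, Matrix.mulVec, Fintype.sum_prod_type, Fin.sum_univ_two, Matrix.diag,
    kroneckerMap_apply]
  ring

lemma sum_formula (ρ : Matrix (Fin 2 × Fin 2) (Fin 2 × Fin 2) ℂ) :
    (star uvec ⬝ᵥ ρ *ᵥ uvec) + (star vvec ⬝ᵥ ρ *ᵥ vvec)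
    + (star wvec ⬝ᵥ ρ *ᵥ wvec) + (star zvec ⬝ᵥ ρ *ᵥ zvec) = 2 * ρ.trace := by
  simp [uvec, vvec, wvec, zvec, Matrix.trace, dotProduct, Matrix.mulVec,
    Fintype.sum_prod_type, Fin.sum_univ_two, Matrix.diag]
  ring

lemma inv_sqrt_mul_self : ((Real.sqrt 2 : ℂ))⁻¹ * ((Real.sqrt 2 : ℂ))⁻¹ = 2⁻¹ := by
  rw [← mul_inv, ← Complex.ofReal_mul, Real.mul_self_sqrt (by norm_num)]
  norm_num

lemma two_mul_inv_sqrt : 2 * ((Real.sqrt 2 : ℂ))⁻¹ = ((Real.sqrt 2 : ℝ) : ℂ) := by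
  have h2 : ((Real.sqrt 2 : ℝ) : ℂ) * ((Real.sqrt 2 : ℝ) : ℂ) = 2 := by
    rw [← Complex.ofReal_mul, Real.mul_self_sqrt (by norm_num)]; norm_num
  have hne : ((Real.sqrt 2 : ℝ) : ℂ) ≠ 0 := by
    simpa using (Real.sqrt_ne_zero'.mpr (by norm_num : (0:ℝ) < 2))
  rw [← h2, mul_assoc, mul_inv_cancel₀ hne, mul_one]

lemma u_phi : (star uvec ⬝ᵥ (vecMulVec phiPlus (star phiPlus)) *ᵥ uvec) = 2 := by
  simp [uvec, phiPlus, vecMulVec, dotProduct, Matrix.mulVec,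
    Fintype.sum_prod_type, Fin.sum_univ_two]
  rw [inv_sqrt_mul_self]; norm_num

lemma v_phi : (star vvec ⬝ᵥ (vecMulVec phiPlus (star phiPlus)) *ᵥ vvec) = 0 := by
  simp [vvec, phiPlus, vecMulVec, dotProduct, Matrix.mulVec,
    Fintype.sum_prod_type, Fin.sum_univ_two]

lemma u_psi : (star uvec ⬝ᵥ (vecMulVec psiMinus (star psiMinus)) *ᵥ uvec) = 0 := by
  simp [uvec, psiMinus, vecMulVec, dotProduct, Matrix.mulVec,
    Fintype.sum_prod_type, Fin.sum_univ_two]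

lemma v_psi : (star vvec ⬝ᵥ (vecMulVec psiMinus (star psiMinus)) *ᵥ vvec) = 2 := by
  simp [vvec, psiMinus, vecMulVec, dotProduct, Matrix.mulVec,
    Fintype.sum_prod_type, Fin.sum_univ_two]
  rw [inv_sqrt_mul_self]; norm_num

lemma smeas_eq (ρ : Matrix (Fin 2 × Fin 2) (Fin 2 × Fin 2) ℂ) :
    Smeas ρ = Real.sqrt 2 *
      ((star uvec ⬝ᵥ ρ *ᵥ uvec).re - (star vvec ⬝ᵥ ρ *ᵥ vvec).re) := by
  rw [Smeas, trace_formula, two_mul_inv_sqrt]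
  simp [Complex.mul_re]

end CHSHAux

/-- The CHSH measure satisfies `−2√2 ≤ S(ρ) ≤ 2√2` for every two-qubit density matrix,
with the maximum `2√2` attained at `|Φ⁺⟩⟨Φ⁺|` and the minimum `−2√2` at `|Ψ⁻⟩⟨Ψ⁻|`. -/
theorem chsh_range_and_extremizers :
    (∀ ρ : Matrix (Fin 2 × Fin 2) (Fin 2 × Fin 2) ℂ, ρ.PosSemidef → ρ.trace = 1 →
      -(2 * Real.sqrt 2) ≤ Smeas ρ ∧ Smeas ρ ≤ 2 * Real.sqrt 2) ∧
    Smeas (vecMulVec phiPlus (star phiPlus)) = 2 * Real.sqrt 2 ∧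
    Smeas (vecMulVec psiMinus (star psiMinus)) = -(2 * Real.sqrt 2) := by
  refine ⟨fun ρ hρ htr => ?_, ?_, ?_⟩
  · have hu := hρ.dotProduct_mulVec_nonneg uvec
    have hv := hρ.dotProduct_mulVec_nonneg vvec
    have hw := hρ.dotProduct_mulVec_nonneg wvec
    have hz := hρ.dotProduct_mulVec_nonneg zvec
    have hx : (0:ℝ) ≤ (star uvec ⬝ᵥ ρ *ᵥ uvec).re := (Complex.nonneg_iff.mp hu).1
    have hy : (0:ℝ) ≤ (star vvec ⬝ᵥ ρ *ᵥ vvec).re := (Complex.nonneg_iff.mp hv).1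
    have hxw : (0:ℝ) ≤ (star wvec ⬝ᵥ ρ *ᵥ wvec).re := (Complex.nonneg_iff.mp hw).1
    have hyz : (0:ℝ) ≤ (star zvec ⬝ᵥ ρ *ᵥ zvec).re := (Complex.nonneg_iff.mp hz).1
    have hsum : (star uvec ⬝ᵥ ρ *ᵥ uvec).re + (star vvec ⬝ᵥ ρ *ᵥ vvec).re
        + (star wvec ⬝ᵥ ρ *ᵥ wvec).re + (star zvec ⬝ᵥ ρ *ᵥ zvec).re = 2 := by
      have := congrArg Complex.re (sum_formula ρ)
      rw [htr] at this
      simpa using this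
    have hs2 : (0:ℝ) ≤ Real.sqrt 2 := Real.sqrt_nonneg 2
    rw [smeas_eq]
    constructor <;> nlinarith
  · rw [smeas_eq, u_phi, v_phi]
    norm_num [mul_comm]
  · rw [smeas_eq, u_psi, v_psi]
    norm_num [mul_comm]
end

section
/- Let Ŝ be the CHSH operator for the fixed observables A₀ = σx, A₁ = σz, B₀ = (σx+σz)/√2, B₁ = (σx−σz)/√2, let ρ be a 4×4 positive semidefinite matrix with trace 1, and let S(ρ) = Tr(ρŜ) and F(ρ) = ⟨Φ⁺|ρ|Φ⁺⟩. For any α ∈ (0, 1/3): (i) if F(ρ) ≤ 1 − 3α then S(ρ) ≤ 2√2 − 6√2·α; and (ii) if F(ρ) ≥ 1 − α then S(ρ) ≥ 2√2 − 4√2·α. -/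
open Matrix Kronecker Complex ComplexOrder

noncomputable section AuxBell

/-- Bell state `|Φ⁻⟩`. -/
def phiMinus' : Fin 2 × Fin 2 → ℂ :=
  fun p => if p = (0, 0) then ((Real.sqrt 2 : ℂ))⁻¹
    else if p = (1, 1) then -((Real.sqrt 2 : ℂ))⁻¹ else 0

/-- Bell state `|Ψ⁺⟩`. -/
def psiPlus' : Fin 2 × Fin 2 → ℂ :=
  fun p => if p = (0, 1) ∨ p = (1, 0) then ((Real.sqrt 2 : ℂ))⁻¹ else 0

lemma hs2 : (Real.sqrt 2 : ℂ) * (Real.sqrt 2 : ℂ) = 2 := by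
  rw [← Complex.ofReal_mul, Real.mul_self_sqrt (by norm_num)]; norm_num

lemma hs2ne : (Real.sqrt 2 : ℂ) ≠ 0 := by
  simpa using Real.sqrt_ne_zero'.mpr (by norm_num : (0:ℝ) < 2)

lemma phiPlus_expand (ρ : Matrix (Fin 2 × Fin 2) (Fin 2 × Fin 2) ℂ) :
    star phiPlus ⬝ᵥ ρ *ᵥ phiPlus =
      (ρ (0,0) (0,0) + ρ (0,0) (1,1) + ρ (1,1) (0,0) + ρ (1,1) (1,1)) / 2 := by
  have hs := hs2; have hs0 := hs2ne
  simp only [phiPlus, dotProduct, mulVec, Fintype.sum_prod_type, Fin.sum_univ_two,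
    Pi.star_apply, Prod.mk.injEq, star_zero, star_inv₀, RCLike.star_def,
    Complex.conj_ofReal]
  norm_num
  field_simp
  ring_nf
  linear_combination (-(ρ (0,0) (0,0) + ρ (0,0) (1,1) + ρ (1,1) (0,0) + ρ (1,1) (1,1))) * hs

lemma psiMinus_expand (ρ : Matrix (Fin 2 × Fin 2) (Fin 2 × Fin 2) ℂ) :
    star psiMinus ⬝ᵥ ρ *ᵥ psiMinus =
      (ρ (0,1) (0,1) - ρ (0,1) (1,0) - ρ (1,0) (0,1) + ρ (1,0) (1,0)) / 2 := by
  have hs := hs2; have hs0 := hs2ne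
  simp only [psiMinus, dotProduct, mulVec, Fintype.sum_prod_type, Fin.sum_univ_two,
    Pi.star_apply, Prod.mk.injEq, star_zero, star_inv₀, star_neg, RCLike.star_def,
    Complex.conj_ofReal]
  norm_num
  field_simp
  ring_nf
  linear_combination (-(ρ (0,1) (0,1) - ρ (0,1) (1,0) - ρ (1,0) (0,1) + ρ (1,0) (1,0))) * hs

lemma phiMinus'_expand (ρ : Matrix (Fin 2 × Fin 2) (Fin 2 × Fin 2) ℂ) :
    star phiMinus' ⬝ᵥ ρ *ᵥ phiMinus' =
      (ρ (0,0) (0,0) - ρ (0,0) (1,1) - ρ (1,1) (0,0) + ρ (1,1) (1,1)) / 2 := by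
  have hs := hs2; have hs0 := hs2ne
  simp only [phiMinus', dotProduct, mulVec, Fintype.sum_prod_type, Fin.sum_univ_two,
    Pi.star_apply, Prod.mk.injEq, star_zero, star_inv₀, star_neg, RCLike.star_def,
    Complex.conj_ofReal]
  norm_num
  field_simp
  ring_nf
  linear_combination (-(ρ (0,0) (0,0) - ρ (0,0) (1,1) - ρ (1,1) (0,0) + ρ (1,1) (1,1))) * hs

lemma psiPlus'_expand (ρ : Matrix (Fin 2 × Fin 2) (Fin 2 × Fin 2) ℂ) :
    star psiPlus' ⬝ᵥ ρ *ᵥ psiPlus' =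
      (ρ (0,1) (0,1) + ρ (0,1) (1,0) + ρ (1,0) (0,1) + ρ (1,0) (1,0)) / 2 := by
  have hs := hs2; have hs0 := hs2ne
  simp only [psiPlus', dotProduct, mulVec, Fintype.sum_prod_type, Fin.sum_univ_two,
    Pi.star_apply, Prod.mk.injEq, star_zero, star_inv₀, RCLike.star_def,
    Complex.conj_ofReal]
  norm_num
  field_simp
  ring_nf
  linear_combination (-(ρ (0,1) (0,1) + ρ (0,1) (1,0) + ρ (1,0) (0,1) + ρ (1,0) (1,0))) * hs

set_option maxHeartbeats 1000000 in
lemma trace_Shat_expand (ρ : Matrix (Fin 2 × Fin 2) (Fin 2 × Fin 2) ℂ) :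
    (ρ * Shat).trace = (Real.sqrt 2 : ℂ) *
      (ρ (0,0) (0,0) + ρ (0,0) (1,1) + ρ (1,1) (0,0) + ρ (1,1) (1,1)
        - ρ (0,1) (0,1) + ρ (0,1) (1,0) + ρ (1,0) (0,1) - ρ (1,0) (1,0)) := by
  have hs := hs2; have hs0 := hs2ne
  simp only [Shat, Bob0, Bob1, sigX, sigZ, Matrix.trace, Matrix.diag, Matrix.mul_apply,
    Fintype.sum_prod_type, Fin.sum_univ_two, Matrix.add_apply, Matrix.sub_apply,
    Matrix.kroneckerMap_apply, Matrix.smul_apply, Matrix.cons_val_zero,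
    Matrix.cons_val_one, Matrix.head_cons, Matrix.head_fin_const, smul_eq_mul]
  norm_num
  field_simp
  ring_nf
  linear_combination (-(ρ (0,0) (0,0) + ρ (0,0) (1,1) + ρ (1,1) (0,0) + ρ (1,1) (1,1)
        - ρ (0,1) (0,1) + ρ (0,1) (1,0) + ρ (1,0) (0,1) - ρ (1,0) (1,0))) * hs

end AuxBell

/-- Hypothesis-to-CHSH translations: for `α ∈ (0, 1/3)`, if `F(ρ) ≤ 1 − 3α` then
`S(ρ) ≤ 2√2 − 6√2·α`, and if `F(ρ) ≥ 1 − α` then `S(ρ) ≥ 2√2 − 4√2·α`. -/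
theorem fidelity_hypotheses_to_chsh (ρ : Matrix (Fin 2 × Fin 2) (Fin 2 × Fin 2) ℂ)
    (hρ : ρ.PosSemidef) (htr : ρ.trace = 1)
    (α : ℝ) (hα : 0 < α) (hα' : α < 1 / 3) :
    (Fent ρ ≤ 1 - 3 * α → Smeas ρ ≤ 2 * Real.sqrt 2 - 6 * Real.sqrt 2 * α) ∧
    (Fent ρ ≥ 1 - α → Smeas ρ ≥ 2 * Real.sqrt 2 - 4 * Real.sqrt 2 * α) := by
  have hs0 : (0:ℝ) < Real.sqrt 2 := Real.sqrt_pos.mpr (by norm_num)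
  -- nonnegativity of the four Bell overlaps
  have pos : ∀ v : Fin 2 × Fin 2 → ℂ, 0 ≤ (star v ⬝ᵥ ρ *ᵥ v).re := by
    intro v
    have h := hρ.dotProduct_mulVec_nonneg v
    rw [Complex.le_def] at h
    simpa using h.1
  set F := Fent ρ with hF
  set G := (star psiMinus ⬝ᵥ ρ *ᵥ psiMinus).re with hG
  set G1 := (star phiMinus' ⬝ᵥ ρ *ᵥ phiMinus').re with hG1
  set G2 := (star psiPlus' ⬝ᵥ ρ *ᵥ psiPlus').re with hG2
  have hGnn : 0 ≤ G := pos _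
  have hG1nn : 0 ≤ G1 := pos _
  have hG2nn : 0 ≤ G2 := pos _
  have hFnn : 0 ≤ F := pos _
  -- sum of four Bell overlaps = trace = 1
  have hsum : F + G + G1 + G2 = 1 := by
    have : (star phiPlus ⬝ᵥ ρ *ᵥ phiPlus) + (star psiMinus ⬝ᵥ ρ *ᵥ psiMinus)
        + (star phiMinus' ⬝ᵥ ρ *ᵥ phiMinus') + (star psiPlus' ⬝ᵥ ρ *ᵥ psiPlus')
        = ρ.trace := by
      rw [phiPlus_expand, psiMinus_expand, phiMinus'_expand, psiPlus'_expand,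
        Matrix.trace, Fintype.sum_prod_type]
      simp [Fin.sum_univ_two, Matrix.diag]
      ring
    have := congrArg Complex.re this
    rw [htr] at this
    simpa [hF, Fent, hG, hG1, hG2] using this
  -- S = 2√2 (F - G)
  have hSeq : Smeas ρ = 2 * Real.sqrt 2 * (F - G) := by
    have h := trace_Shat_expand ρ
    have h2 : (ρ * Shat).trace = (Real.sqrt 2 : ℂ) *
        (2 * (star phiPlus ⬝ᵥ ρ *ᵥ phiPlus) - 2 * (star psiMinus ⬝ᵥ ρ *ᵥ psiMinus)) := by
      rw [h, phiPlus_expand, psiMinus_expand]; ring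
    rw [Smeas, h2, Complex.re_ofReal_mul]
    simp only [Complex.sub_re, Complex.mul_re]
    rw [hF, Fent, hG]
    norm_num
    ring
  constructor
  · intro hF3
    have hG0 : 0 ≤ G := hGnn
    rw [hSeq]
    nlinarith [hs0, hGnn]
  · intro hF1
    have hGle : G ≤ 1 - F := by linarith
    rw [hSeq]
    nlinarith [hs0]
end

section
/- (Correctness of CHSH-based Entanglement Verification via Chebyshev) Let α ∈ (0, 1/3), δ ∈ (0, 1), and let (Ω, P) carry a mutually independent family X : Fin 2 × Fin 2 → Fin N → Ω → ℝ of random variables each taking values in {−1, 1}, with common mean μ(i,j) in each family. Let S = μ(0,0) + μ(1,0) + μ(0,1) − μ(1,1), S̄ = m(0,0) + m(1,0) + m(0,1) − m(1,1) with m(i,j) = (1/N)∑ₖ X (i,j) k, and θ = 2√2 − 5√2·α. Suppose ρ is a two-qubit density matrix with S = S(ρ) and F = F(ρ). If N ≥ 3/(δ α²), then: (i) if F ≤ 1 − 3α, then P[S̄ ≥ θ] ≤ δ; and (ii) if F ≥ 1 − α, then P[S̄ < θ] ≤ δ. That is, the test 'accept H₀ : F ≥ 1−α iff S̄ ≥ θ'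 distinguishes H₀ : F ≥ 1−α from H₁ : F ≤ 1−3α with error probability at most δ. -/
open Matrix Kronecker Complex ComplexOrder

open MeasureTheory ProbabilityTheory Finset

noncomputable section

/-- Empirical mean `m(i,j) = (1/N) ∑ₖ X (i,j) k`. -/
def empMean {Ω : Type*} {N : ℕ} (X : Fin 2 × Fin 2 → Fin N → Ω → ℝ)
    (ij : Fin 2 × Fin 2) (ω : Ω) : ℝ :=
  (1 / N) * ∑ k, X ij k ω

/-- Empirical CHSH estimate `S̄ = m(0,0) + m(1,0) + m(0,1) − m(1,1)`. -/
def SbarEmp {Ω : Type*} {N : ℕ} (X : Fin 2 × Fin 2 → Fin N → Ω → ℝ) (ω : Ω) : ℝ :=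
  empMean X (0, 0) ω + empMean X (1, 0) ω + empMean X (0, 1) ω - empMean X (1, 1) ω

/-- True CHSH value `S = μ(0,0) + μ(1,0) + μ(0,1) − μ(1,1)`. -/
def Strue (μ : Fin 2 × Fin 2 → ℝ) : ℝ := μ (0, 0) + μ (1, 0) + μ (0, 1) - μ (1, 1)

end

noncomputable section AuxBell

open Matrix Kronecker Complex ComplexOrder

/-- Bell state `|Φ⁻⟩`. -/
def phiMinusAux : Fin 2 × Fin 2 → ℂ :=
  fun p => if p = (0, 0) then ((Real.sqrt 2 : ℂ))⁻¹
    else if p = (1, 1) then -((Real.sqrt 2 : ℂ))⁻¹ else 0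

/-- Bell state `|Ψ⁺⟩`. -/
def psiPlusAux : Fin 2 × Fin 2 → ℂ :=
  fun p => if p = (0, 1) ∨ p = (1, 0) then ((Real.sqrt 2 : ℂ))⁻¹ else 0

lemma trace_Shat_id (ρ : Matrix (Fin 2 × Fin 2) (Fin 2 × Fin 2) ℂ) :
    (ρ * Shat).trace = (2 * Real.sqrt 2 : ℝ) *
      (star phiPlus ⬝ᵥ ρ *ᵥ phiPlus - star psiMinus ⬝ᵥ ρ *ᵥ psiMinus) := by
  have h2 : (Real.sqrt 2:ℂ) * (Real.sqrt 2:ℂ) = 2 := by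
    norm_cast; rw [Real.mul_self_sqrt]; norm_num
  have hne : (Real.sqrt 2:ℂ) ≠ 0 := by
    intro h; rw [h] at h2; simp at h2
  have hinv : ((Real.sqrt 2:ℂ))⁻¹ = (Real.sqrt 2:ℂ) / 2 := by
    field_simp
    linear_combination -h2
  simp only [Matrix.trace, Matrix.diag, Matrix.mul_apply, dotProduct,
    Matrix.mulVec, Shat, sigX, sigZ, Bob0, Bob1, phiPlus, psiMinus, Fintype.sum_prod_type,
    Fin.sum_univ_two, Matrix.kroneckerMap_apply, Matrix.smul_apply, Matrix.add_apply,
    Matrix.sub_apply, Matrix.cons_val', Matrix.cons_val_zero, Matrix.cons_val_one,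
    Matrix.head_cons, Matrix.head_fin_const, Matrix.empty_val', Matrix.cons_val_fin_one,
    Pi.star_apply, smul_eq_mul, hinv, Prod.mk.injEq]
  norm_num [Prod.ext_iff, Fin.ext_iff]
  have h3 : (Real.sqrt 2:ℂ)^3 = 2 * Real.sqrt 2 := by
    rw [pow_succ, pow_two, h2]
  ring_nf
  rw [h3]
  ring

lemma bell_complete (ρ : Matrix (Fin 2 × Fin 2) (Fin 2 × Fin 2) ℂ) :
    star phiPlus ⬝ᵥ ρ *ᵥ phiPlus + star psiMinus ⬝ᵥ ρ *ᵥ psiMinus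
      + star phiMinusAux ⬝ᵥ ρ *ᵥ phiMinusAux + star psiPlusAux ⬝ᵥ ρ *ᵥ psiPlusAux
      = ρ.trace := by
  have h2 : (Real.sqrt 2:ℂ) * (Real.sqrt 2:ℂ) = 2 := by
    norm_cast; rw [Real.mul_self_sqrt]; norm_num
  have hne : (Real.sqrt 2:ℂ) ≠ 0 := by
    intro h; rw [h] at h2; simp at h2
  have hinv : ((Real.sqrt 2:ℂ))⁻¹ = (Real.sqrt 2:ℂ) / 2 := by
    field_simp
    linear_combination -h2
  simp only [Matrix.trace, Matrix.diag, dotProduct, Matrix.mulVec,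
    phiPlus, psiMinus, phiMinusAux, psiPlusAux, Fintype.sum_prod_type,
    Fin.sum_univ_two, Pi.star_apply, smul_eq_mul, hinv, Prod.mk.injEq]
  norm_num [Prod.ext_iff, Fin.ext_iff]
  ring_nf
  rw [show (Real.sqrt 2:ℂ)^2 = 2 by rw [pow_two, h2]]
  ring

lemma quadform_re_nonneg {ρ : Matrix (Fin 2 × Fin 2) (Fin 2 × Fin 2) ℂ}
    (hρ : ρ.PosSemidef) (v : Fin 2 × Fin 2 → ℂ) :
    0 ≤ (star v ⬝ᵥ ρ *ᵥ v).re := by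
  have := hρ.dotProduct_mulVec_nonneg v
  rw [Complex.le_def] at this
  simpa using this.1

/-- Key spectral bounds: `2√2(2F−1) ≤ S(ρ) ≤ 2√2·F(ρ)` for a density matrix. -/
lemma Smeas_bounds {ρ : Matrix (Fin 2 × Fin 2) (Fin 2 × Fin 2) ℂ}
    (hρ : ρ.PosSemidef) (htr : ρ.trace = 1) :
    2 * Real.sqrt 2 * (2 * Fent ρ - 1) ≤ Smeas ρ ∧ Smeas ρ ≤ 2 * Real.sqrt 2 * Fent ρ := by
  have hs2 : (0:ℝ) < Real.sqrt 2 := Real.sqrt_pos.2 (by norm_num)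
  set G : ℝ := (star psiMinus ⬝ᵥ ρ *ᵥ psiMinus).re with hG
  have hSeq : Smeas ρ = 2 * Real.sqrt 2 * (Fent ρ - G) := by
    rw [Smeas, trace_Shat_id]
    rw [Complex.re_ofReal_mul, Complex.sub_re]
    rfl
  have hG0 : 0 ≤ G := quadform_re_nonneg hρ psiMinus
  have hsum : Fent ρ + G ≤ 1 := by
    have h := congrArg Complex.re (bell_complete ρ)
    rw [htr] at h
    simp only [Complex.add_re, Complex.one_re] at h
    have h1 := quadform_re_nonneg hρ phiMinusAux
    have h2 := quadform_re_nonneg hρ psiPlusAux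
    rw [Fent]
    linarith
  constructor
  · rw [hSeq]; nlinarith
  · rw [hSeq]; nlinarith

end AuxBell

/-- Correctness of CHSH-based Entanglement Verification via Chebyshev: with threshold
`θ = 2√2 − 5√2·α` and sample size `N ≥ 3/(δ α²)`, the test `accept H₀ iff S̄ ≥ θ`
distinguishes `H₀ : F(ρ) ≥ 1 − α` from `H₁ : F(ρ) ≤ 1 − 3α` with error probability at
most δ. -/
theorem entanglement_verification_correct {Ω : Type*} [MeasurableSpace Ω]
    (P : MeasureTheory.Measure Ω) [MeasureTheory.IsProbabilityMeasure P]
    (N : ℕ) (hN : 0 < N)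
    (X : Fin 2 × Fin 2 → Fin N → Ω → ℝ)
    (hmeas : ∀ ij k, Measurable (X ij k))
    (hindep : ProbabilityTheory.iIndepFun
      (fun (p : (Fin 2 × Fin 2) × Fin N) => X p.1 p.2) P)
    (hval : ∀ ij k ω, X ij k ω = 1 ∨ X ij k ω = -1)
    (μ : Fin 2 × Fin 2 → ℝ)
    (hmean : ∀ ij k, ∫ ω, X ij k ω ∂P = μ ij)
    (α δ : ℝ) (hα : 0 < α) (hα' : α < 1 / 3) (hδ : 0 < δ) (hδ' : δ < 1)
    (ρ : Matrix (Fin 2 × Fin 2) (Fin 2 × Fin 2) ℂ)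
    (hρ : ρ.PosSemidef) (htr : ρ.trace = 1)
    (hSρ : Strue μ = Smeas ρ)
    (hNbig : (N : ℝ) ≥ 3 / (δ * α ^ 2)) :
    (Fent ρ ≤ 1 - 3 * α →
      (P {ω | SbarEmp X ω ≥ 2 * Real.sqrt 2 - 5 * Real.sqrt 2 * α}).toReal ≤ δ) ∧
    (Fent ρ ≥ 1 - α →
      (P {ω | SbarEmp X ω < 2 * Real.sqrt 2 - 5 * Real.sqrt 2 * α}).toReal ≤ δ) := by
  classical
  open MeasureTheory ProbabilityTheory in
  have hs2 : (0:ℝ) < Real.sqrt 2 := Real.sqrt_pos.2 (by norm_num)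
  have hNpos : (0:ℝ) < N := Nat.cast_pos.2 hN
  set c : Fin 2 × Fin 2 → ℝ := fun ij => if ij = (1,1) then (-1:ℝ) else 1 with hc
  have hc1 : ∀ ij, c ij = 1 ∨ c ij = -1 := by
    intro ij; simp only [hc]; split <;> simp
  set Y : (Fin 2 × Fin 2) × Fin N → Ω → ℝ :=
    fun p ω => (c p.1 / N) * X p.1 p.2 ω with hYdef
  -- each X is in L²
  have hXmem : ∀ ij k, MemLp (X ij k) 2 P := by
    intro ij k
    apply MemLp.of_bound (hmeas ij k).aestronglyMeasurable 1
    filter_upwards with ω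
    rcases hval ij k ω with h | h <;> simp [h]
  have hYmem : ∀ p, MemLp (Y p) 2 P := fun p => (hXmem p.1 p.2).const_mul _
  -- T = S̄
  set T : Ω → ℝ := fun ω => ∑ p : (Fin 2 × Fin 2) × Fin N, Y p ω with hTdef
  have hT : ∀ ω, T ω = SbarEmp X ω := by
    intro ω
    simp only [hTdef, hYdef, SbarEmp, empMean, Fintype.sum_prod_type, Fin.sum_univ_two, hc,
      Prod.mk.injEq]
    norm_num [Prod.ext_iff, Fin.ext_iff, Finset.mul_sum]
    simp only [show ∀ (x : Fin N), -1/(N:ℝ) * X (1, 1) x ω = -((N:ℝ)⁻¹ * X (1, 1) x ω)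
      from fun x => by ring, Finset.sum_neg_distrib]
    ring
  have hTmem : MemLp T 2 P := by
    have := memLp_finsetSum' (μ := P) Finset.univ (fun p _ => hYmem p)
    convert this using 1
    ext ω
    simp [hTdef, Finset.sum_apply]
  -- expectation of T
  have hTint : ∫ ω, T ω ∂P = Strue μ := by
    have : ∫ ω, T ω ∂P = ∑ p : (Fin 2 × Fin 2) × Fin N, ∫ ω, Y p ω ∂P := by
      apply integral_finset_sum
      intro p _
      exact (hYmem p).integrable one_le_two
    rw [this]
    have hYint : ∀ p : (Fin 2 × Fin 2) × Fin N, ∫ ω, Y p ω ∂P = (c p.1 / N) * μ p.1 := by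
      intro p
      simp only [hYdef]
      rw [integral_const_mul, hmean]
    simp only [hYint, Fintype.sum_prod_type, Finset.sum_const, Finset.card_univ, Fintype.card_fin,
      nsmul_eq_mul]
    simp only [Strue, Fintype.sum_prod_type, Fin.sum_univ_two, hc, Prod.mk.injEq]
    norm_num [Prod.ext_iff, Fin.ext_iff]
    field_simp
    ring
  -- variance bound
  have hvarX : ∀ ij k, variance (X ij k) P ≤ 1 := by
    intro ij k
    have h1 : (∫ ω, (X ij k ω)^2 ∂P) = 1 := by
      have : ∀ ω, (X ij k ω)^2 = 1 := by
        intro ω; rcases hval ij k ω with h | h <;> simp [h]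
      simp only [this]
      simp
    calc variance (X ij k) P ≤ ∫ ω, (X ij k ω)^2 ∂P :=
          variance_le_expectation_sq (hmeas ij k).aestronglyMeasurable
      _ = 1 := h1
  have hvarY : ∀ p, variance (Y p) P ≤ 1 / (N:ℝ)^2 := by
    intro p
    have : variance (Y p) P = (c p.1 / N)^2 * variance (X p.1 p.2) P :=
      variance_const_mul _ _ _
    rw [this]
    have hcsq : (c p.1 / N)^2 = 1 / (N:ℝ)^2 := by
      rcases hc1 p.1 with h | h <;> rw [h] <;> ring
    rw [hcsq]
    have := hvarX p.1 p.2
    have h0 : (0:ℝ) < 1 / (N:ℝ)^2 := by positivity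
    nlinarith [variance_nonneg (X p.1 p.2) P]
  have hvarT : variance T P ≤ 4 / N := by
    have hpair : Set.Pairwise (↑(Finset.univ : Finset ((Fin 2 × Fin 2) × Fin N)))
        fun p q => IndepFun (Y p) (Y q) P := by
      intro p _ q _ hpq
      have := hindep.indepFun hpq
      exact this.comp (measurable_const_mul (c p.1 / N)) (measurable_const_mul (c q.1 / N))
    have hsum := IndepFun.variance_sum (μ := P) (fun p _ => hYmem p) hpair
    have hTeq : T = ∑ p : (Fin 2 × Fin 2) × Fin N, Y p := by
      ext ω; simp [hTdef, Finset.sum_apply]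
    rw [hTeq, hsum]
    calc ∑ p : (Fin 2 × Fin 2) × Fin N, variance (Y p) P
        ≤ ∑ _p : (Fin 2 × Fin 2) × Fin N, 1 / (N:ℝ)^2 :=
          Finset.sum_le_sum (fun p _ => hvarY p)
      _ = (4 * N) * (1 / (N:ℝ)^2) := by
          simp [Finset.sum_const, Finset.card_univ]
          try ring
      _ = 4 / N := by field_simp
  -- Chebyshev
  have hcheb : (P {ω | Real.sqrt 2 * α ≤ |T ω - Strue μ|}).toReal ≤ δ := by
    have hc0 : (0:ℝ) < Real.sqrt 2 * α := by positivity
    have h := meas_ge_le_variance_div_sq (μ := P) hTmem hc0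
    rw [show (∫ ω, T ω ∂P) = Strue μ from hTint] at h
    have h2 : (P {ω | Real.sqrt 2 * α ≤ |T ω - Strue μ|}).toReal
        ≤ variance T P / (Real.sqrt 2 * α)^2 := by
      calc (P {ω | Real.sqrt 2 * α ≤ |T ω - Strue μ|}).toReal
          ≤ (ENNReal.ofReal (variance T P / (Real.sqrt 2 * α)^2)).toReal :=
            ENNReal.toReal_mono ENNReal.ofReal_ne_top h
        _ = variance T P / (Real.sqrt 2 * α)^2 :=
            ENNReal.toReal_ofReal (div_nonneg (variance_nonneg _ _) (by positivity))
    have hsq : (Real.sqrt 2 * α)^2 = 2 * α^2 := by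
      rw [mul_pow, Real.sq_sqrt] <;> norm_num
    rw [hsq] at h2
    have h3 : variance T P / (2 * α^2) ≤ (4 / N) / (2 * α^2) := by
      apply div_le_div_of_nonneg_right hvarT (by positivity) |>.trans_eq rfl
    have h4 : (4 / (N:ℝ)) / (2 * α^2) ≤ δ := by
      rw [div_div, div_le_iff₀ (by positivity)]
      have hN3 : 3 ≤ (N:ℝ) * (δ * α^2) := by
        rw [ge_iff_le, div_le_iff₀ (by positivity)] at hNbig
        linarith
      nlinarith
    linarith
  -- spectral bounds
  obtain ⟨hSlow, hShigh⟩ := Smeas_bounds hρ htr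
  refine ⟨fun hF => ?_, fun hF => ?_⟩
  · -- F ≤ 1 − 3α : S ≤ 2√2(1−3α)
    have hS : Strue μ ≤ 2 * Real.sqrt 2 - 6 * Real.sqrt 2 * α := by
      rw [hSρ]
      have h := mul_le_mul_of_nonneg_left hF
        (le_of_lt (by positivity : (0:ℝ) < 2 * Real.sqrt 2))
      ring_nf at h ⊢
      linarith [hShigh]
    have hsub : {ω | SbarEmp X ω ≥ 2 * Real.sqrt 2 - 5 * Real.sqrt 2 * α}
        ⊆ {ω | Real.sqrt 2 * α ≤ |T ω - Strue μ|} := by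
      intro ω hω
      simp only [Set.mem_setOf_eq] at hω ⊢
      rw [hT ω]
      have : Real.sqrt 2 * α ≤ SbarEmp X ω - Strue μ := by linarith [hω, hS]
      exact this.trans (le_abs_self _)
    calc (P {ω | SbarEmp X ω ≥ 2 * Real.sqrt 2 - 5 * Real.sqrt 2 * α}).toReal
        ≤ (P {ω | Real.sqrt 2 * α ≤ |T ω - Strue μ|}).toReal :=
          ENNReal.toReal_mono (measure_ne_top P _) (measure_mono hsub)
      _ ≤ δ := hcheb
  · -- F ≥ 1 − α : S ≥ 2√2(2(1−α)−1) = 2√2 − 4√2 α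
    have hS : Strue μ ≥ 2 * Real.sqrt 2 - 4 * Real.sqrt 2 * α := by
      rw [hSρ]
      have h := mul_le_mul_of_nonneg_left
        (show 1 - 2*α ≤ 2 * Fent ρ - 1 by linarith)
        (le_of_lt (by positivity : (0:ℝ) < 2 * Real.sqrt 2))
      ring_nf at h ⊢
      linarith [hSlow]
    have hsub : {ω | SbarEmp X ω < 2 * Real.sqrt 2 - 5 * Real.sqrt 2 * α}
        ⊆ {ω | Real.sqrt 2 * α ≤ |T ω - Strue μ|} := by
      intro ω hω
      simp only [Set.mem_setOf_eq] at hω ⊢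
      rw [hT ω]
      have : Real.sqrt 2 * α ≤ Strue μ - SbarEmp X ω := by linarith [hω, hS]
      rw [abs_sub_comm]
      exact this.trans (le_abs_self _)
    calc (P {ω | SbarEmp X ω < 2 * Real.sqrt 2 - 5 * Real.sqrt 2 * α}).toReal
        ≤ (P {ω | Real.sqrt 2 * α ≤ |T ω - Strue μ|}).toReal :=
          ENNReal.toReal_mono (measure_ne_top P _) (measure_mono hsub)
      _ ≤ δ := hcheb
end
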